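/- Let A be a nonzero commutative ring that is finitely generated as a ℤ-algebra and torsion-free as a ℤ-module. Then the set of prime integers p > 0 such that the image of p is a unit of A is finite. -/

import Mathlib

noncomputable section

universe u

lemma aux_mem_of_integral_of_inv {K : Type u} [Field K] (R : Subalgebra ℤ K) {x z : K}
    (hz : z ∈ R) (hxz : z * x = 1) (hx : IsIntegral (↥R) x) : x ∈ R := by
  obtain ⟨f, hmon, heval⟩ := hx
  set n := f.natDegree with hn
  have hn1 : 1 ≤ n := by
    rcases Nat.eq_zero_or_pos n with h | h
    · exfalso
      have hf1 : f = 1 := Polynomial.eq_one_of_monic_natDegree_zero hmon (hn ▸ h)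
      rw [hf1] at heval
      simp at heval
    · exact h
  have heval' : (Polynomial.aeval x) f = 0 := heval
  rw [Polynomial.aeval_eq_sum_range] at heval'
  have hzx : ∀ i : ℕ, z ^ (n - 1) * x ^ i = (if i ≤ n - 1 then z ^ (n - 1 - i) else z ^ (n-1) * x ^ i) := by
    intro i
    split_ifs with h
    · have : z ^ (n-1) = z ^ (n-1-i) * z ^ i := by rw [← pow_add]; congr 1; omega
      rw [this, mul_assoc, ← mul_pow, hxz, one_pow, mul_one]
    · rfl
  have key : x = -∑ i ∈ Finset.range n, ((f.coeff i : K)) * z ^ (n - 1 - i) := by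
    have h2 := congrArg (fun t => z ^ (n-1) * t) heval'
    simp only [Finset.mul_sum, mul_zero] at h2
    rw [← hn, Finset.sum_range_succ] at h2
    have hc : f.coeff n = 1 := hmon
    have e1 : z ^ (n-1) * (f.coeff n • x ^ n) = x := by
      rw [hc, one_smul]
      have hx' : x ^ n = x ^ (n-1) * x := by rw [← pow_succ]; congr 1; omega
      rw [hx', ← mul_assoc, ← mul_pow, hxz, one_pow, one_mul]
    have e2 : ∀ i ∈ Finset.range n, z ^ (n-1) * (f.coeff i • x ^ i) = (f.coeff i : K) * z ^ (n - 1 - i) := by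
      intro i hi
      simp only [Finset.mem_range] at hi
      have hs : (f.coeff i • x ^ i : K) = (f.coeff i : K) * x ^ i := by
        rw [Algebra.smul_def]; rfl
      rw [hs, mul_comm ((f.coeff i : K)) _, ← mul_assoc, hzx i, if_pos (by omega), mul_comm]
    rw [Finset.sum_congr rfl e2, e1] at h2
    exact eq_neg_of_add_eq_zero_right h2
  rw [key]
  exact neg_mem (Subalgebra.sum_mem _ (fun i _ => mul_mem (f.coeff i).2 (pow_mem hz _)))

lemma aux_denom {K : Type u} [Field K] {N : ℤ} (hN : (N : K) ≠ 0) {z : K}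
    (hz : z ∈ Algebra.adjoin ℤ {((N : K))⁻¹}) : ∃ (m : ℤ) (d : ℕ), z * (N : K) ^ d = (m : K) := by
  rw [Algebra.adjoin_singleton_eq_range_aeval] at hz
  obtain ⟨g, hg⟩ := hz
  set d := g.natDegree with hd
  refine ⟨∑ i ∈ Finset.range (d + 1), g.coeff i * N ^ (d - i), d, ?_⟩
  rw [← hg]; show (Polynomial.aeval ((N:K))⁻¹) g * (N:K) ^ d = _; rw [Polynomial.aeval_eq_sum_range, Finset.sum_mul]
  push_cast
  refine Finset.sum_congr rfl fun i hi => ?_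
  simp only [Finset.mem_range] at hi
  have : (N : K) ^ d = (N : K) ^ i * (N : K) ^ (d - i) := by rw [← pow_add]; congr 1; omega
  rw [zsmul_eq_mul, mul_assoc, this, ← mul_assoc ((N:K)⁻¹ ^ i), inv_pow,
    inv_mul_cancel₀ (pow_ne_zero _ hN), one_mul]

set_option maxHeartbeats 1000000 in
set_option synthInstance.maxHeartbeats 1000000 in
/-- Let `A` be a nonzero commutative ring that is finitely generated as a `ℤ`-algebra and
torsion-free as a `ℤ`-module (multiplication by every nonzero integer is injective on `A`).
Then the set of prime integers `p > 0` whose image in `A` is a unit is finite. -/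
theorem finite_primes_isUnit (A : Type u) [CommRing A] [Nontrivial A]
    (hfg : Algebra.FiniteType ℤ A)
    (htf : ∀ m : ℤ, m ≠ 0 → Function.Injective fun a : A => m • a) :
    {p : ℕ | p.Prime ∧ IsUnit ((p : ℕ) : A)}.Finite := by
  classical
  set M : Submonoid A := (nonZeroDivisors ℤ).map (Int.castRingHom A : ℤ →* A) with hM
  have hMle : M ≤ nonZeroDivisors A := by
    rintro x ⟨n, hn, rfl⟩
    rw [mem_nonZeroDivisors_iff_right]
    intro a ha
    have hn0 : n ≠ 0 := nonZeroDivisors.ne_zero hn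
    have : (fun a : A => n • a) a = (fun a : A => n • a) 0 := by
      simp only [smul_zero]
      rw [zsmul_eq_mul]
      simpa [mul_comm] using ha
    exact htf n hn0 this
  set B := Localization M with hB
  have hinjAB : Function.Injective (algebraMap A B) := IsLocalization.injective B hMle
  haveI : Nontrivial B := by
    refine ⟨1, 0, fun h => one_ne_zero (hinjAB ?_)⟩
    rw [map_one, map_zero, h]
  haveI :=
    IsScalarTower.of_algebraMap_eq' (R := ℤ) (S := A) (A := B) (Subsingleton.elim _ _)
  have hu : ∀ y : nonZeroDivisors ℤ, IsUnit (algebraMap ℤ B y) := by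
    intro y
    have hmem : (((y : ℤ) : ℤ) : A) ∈ M := by
      refine Submonoid.mem_map.mpr ⟨(y : ℤ), y.2, rfl⟩
    have h1 : algebraMap ℤ B (y : ℤ) = algebraMap A B (((y : ℤ) : ℤ) : A) := by
      rw [IsScalarTower.algebraMap_apply ℤ A B]
      rfl
    rw [h1]
    exact IsLocalization.map_units (M := M) B ⟨_, hmem⟩
  letI : Algebra ℚ B := RingHom.toAlgebra (IsLocalization.lift (M := nonZeroDivisors ℤ) hu)
  haveI :=
    IsScalarTower.of_algebraMap_eq' (R := ℤ) (S := ℚ) (A := B) (Subsingleton.elim _ _)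
  obtain ⟨s, hs⟩ := hfg.out
  have hadj : Algebra.adjoin ℚ ((algebraMap A B) '' s) = ⊤ := by
    rw [eq_top_iff]
    rintro b -
    obtain ⟨⟨a, m⟩, hb⟩ := IsLocalization.mk'_surjective M b
    obtain ⟨n, hn, hnm0⟩ := m.2
    have hnm : ((n : ℤ) : A) = (m : A) := hnm0
    have hn0 : n ≠ 0 := nonZeroDivisors.ne_zero hn
    have hmem : algebraMap A B a ∈ Algebra.adjoin ℚ ((algebraMap A B) '' s) := by
      have h1 : algebraMap A B a ∈ Algebra.adjoin ℤ ((algebraMap A B) '' s) := by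
        rw [show ((algebraMap A B) '' s : Set B) = (IsScalarTower.toAlgHom ℤ A B) '' s from rfl,
          ← AlgHom.map_adjoin, hs]
        exact ⟨a, trivial, rfl⟩
      have h2 : Algebra.adjoin ℤ ((algebraMap A B) '' s) ≤
          Subalgebra.restrictScalars ℤ (Algebra.adjoin ℚ ((algebraMap A B) '' s)) :=
        Algebra.adjoin_le Algebra.subset_adjoin
      exact h2 h1
    have hspec : b * algebraMap A B (m : A) = algebraMap A B a := by
      rw [← hb]; exact IsLocalization.mk'_spec B a m
    have key : b = ((n : ℚ)⁻¹) • (algebraMap A B a) := by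
      rw [← hspec, ← hnm]
      have hcast : algebraMap A B (((n : ℤ)) : A) = algebraMap ℚ B (n : ℚ) := by
        rw [show (((n : ℤ)) : A) = algebraMap ℤ A n from rfl,
          ← IsScalarTower.algebraMap_apply, IsScalarTower.algebraMap_apply ℤ ℚ B]
        norm_num
      rw [hcast, Algebra.smul_def, ← mul_assoc, mul_comm _ b, mul_assoc, ← map_mul]
      have h1 : ((n : ℚ)⁻¹) * (n : ℚ) = 1 := inv_mul_cancel₀ (by exact_mod_cast hn0)
      rw [h1, map_one, mul_one]
    rw [key]
    exact Subalgebra.smul_mem _ hmem _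
  haveI hftB : Algebra.FiniteType ℚ B := ⟨⟨s.image (algebraMap A B), by rwa [Finset.coe_image]⟩⟩
  obtain ⟨I, hI⟩ := Ideal.exists_maximal B
  letI K := B ⧸ I
  letI : Field K := Ideal.Quotient.field I
  letI : Algebra ℚ K := Ideal.Quotient.algebra ℚ
  letI : Algebra ℤ K := Ring.toIntAlgebra K
  haveI :=
    IsScalarTower.of_algebraMap_eq' (R := ℤ) (S := ℚ) (A := K) (Subsingleton.elim _ _)
  haveI : Algebra.FiniteType ℚ K :=
    Algebra.FiniteType.of_surjective (Ideal.Quotient.mkₐ ℚ I) (Ideal.Quotient.mkₐ_surjective ℚ I)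
  haveI hfinK : Module.Finite ℚ K := finite_of_finite_type_of_isJacobsonRing ℚ K
  haveI : CharZero K := charZero_of_injective_algebraMap (algebraMap ℚ K).injective
  set φ : A →+* K := (Ideal.Quotient.mk I).comp (algebraMap A B) with hφ
  have halg : ∀ x : A, ∃ d : ℤ, d ≠ 0 ∧ IsIntegral ℤ ((d : K) * φ x) := by
    intro x
    have h1 : IsAlgebraic ℚ (φ x) := (IsIntegral.of_finite ℚ (φ x)).isAlgebraic
    have h2 : IsAlgebraic ℤ (φ x) := by
      rwa [IsFractionRing.isAlgebraic_iff ℤ ℚ K]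
    have hinj0 : ∀ z : ℤ, algebraMap ℤ K z = 0 → z = 0 := by
      intro z hz
      rw [eq_intCast] at hz
      exact_mod_cast hz
    obtain ⟨d, hd0, hcd⟩ := h2.exists_integral_multiple
    refine ⟨d, hd0, ?_⟩
    have he : (d : K) * φ x = d • φ x := by rw [Algebra.smul_def, eq_intCast]
    rw [he]
    exact hcd
  choose dfun hd0 hdint using halg
  set N : ℤ := ∏ x ∈ s, dfun x with hN
  have hN0 : N ≠ 0 := Finset.prod_ne_zero_iff.mpr (fun x _ => hd0 x)
  apply Set.Finite.subset (N.natAbs.divisors : Finset ℕ).finite_toSet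
  rintro p ⟨hp, hpu⟩
  simp only [Finset.mem_coe, Nat.mem_divisors]
  refine ⟨?_, Int.natAbs_ne_zero.mpr hN0⟩
  obtain ⟨v, hv⟩ := hpu.exists_right_inv
  have hNK : ((N : ℤ) : K) ≠ 0 := Int.cast_ne_zero.mpr hN0
  set y : K := ((N : K))⁻¹ with hy
  set R : Subalgebra ℤ K := Algebra.adjoin ℤ {y} with hR
  have hyR : y ∈ R := Algebra.subset_adjoin rfl
  -- generators are integral over R
  have hint : ∀ k ∈ φ '' (s : Set A), IsIntegral (↥R) k := by
    rintro k ⟨x, hx, rfl⟩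
    set d : ℤ := dfun x with hd
    set e : ℤ := ∏ z ∈ s.erase x, dfun z with he
    have hde : d * e = N := Finset.mul_prod_erase s dfun hx
    have hdK : (d : K) ≠ 0 := Int.cast_ne_zero.mpr (hd0 x)
    have hdinv : ((d : K))⁻¹ ∈ R := by
      have hcalc : (d : K) * ((e : K) * y) = 1 := by
        rw [← mul_assoc, ← Int.cast_mul, hde, hy, mul_inv_cancel₀ hNK]
      rw [inv_eq_of_mul_eq_one_right hcalc]
      exact mul_mem (intCast_mem R e) hyR
    have hi1 : IsIntegral (↥R) ((d : K) * φ x) := (hdint x).tower_top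
    have hi2 : IsIntegral (↥R) (((d : K))⁻¹) := by
      have := isIntegral_algebraMap (R := ↥R) (A := K) (x := (⟨_, hdinv⟩ : ↥R))
      exact this
    have hrw : φ x = ((d : K))⁻¹ * ((d : K) * φ x) := by
      rw [← mul_assoc, inv_mul_cancel₀ hdK, one_mul]
    rw [hrw]
    exact hi2.mul hi1
  -- φ v is integral over R
  have hφv_adj : φ v ∈ Algebra.adjoin ℤ (φ '' (s : Set A)) := by
    have hmapeq := AlgHom.map_adjoin (φ.toIntAlgHom) (s : Set A)
    rw [hs] at hmapeq
    have : φ v ∈ Algebra.adjoin ℤ ((φ.toIntAlgHom) '' (s : Set A)) := by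
      rw [← hmapeq]
      exact ⟨v, trivial, rfl⟩
    exact this
  have hφv_int : IsIntegral (↥R) (φ v) := by
    have hsub : Algebra.adjoin ℤ (φ '' (s : Set A)) ≤
        Subalgebra.restrictScalars ℤ (integralClosure (↥R) K) :=
      Algebra.adjoin_le (fun k hk => hint k hk)
    exact hsub hφv_adj
  have hpK : ((p : ℕ) : K) * φ v = 1 := by
    have := congrArg φ hv
    rwa [map_mul, map_one, map_natCast] at this
  have hvR : φ v ∈ R := aux_mem_of_integral_of_inv R (natCast_mem R p) hpK hφv_int
  obtain ⟨m, d', hmd⟩ := aux_denom hNK (hR ▸ hvR)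
  have hcastEq : ((p * m : ℤ) : K) = ((N ^ d' : ℤ) : K) := by
    push_cast
    rw [← hmd, ← mul_assoc, hpK, one_mul]
  have hZ : (p : ℤ) * m = N ^ d' := by exact_mod_cast Int.cast_injective hcastEq
  have hpprime : Prime ((p : ℕ) : ℤ) := Nat.prime_iff_prime_int.mp hp
  have hdvd : ((p : ℕ) : ℤ) ∣ N := hpprime.dvd_of_dvd_pow ⟨m, hZ.symm⟩
  have := Int.natAbs_dvd_natAbs.mpr hdvd
  simpa using this
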